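/- Let (S, μ, η) be a monad on C equipped with a differential combinator transformation ∂, and define λ_A := ⟨S(π₁), S(π₁+π₄)∘∂_{A×A}⟩ : S(A×A) → S(A)×S(A). Then λ is natural in A and is a distributive law of the diagonal endofunctor A ↦ A×A over the monad (S, μ, η); that is, λ_A∘η_{A×A} = η_A × η_A and λ_A∘μ_{A×A} = (μ_A × μ_A)∘λ_{S(A)}∘S(λ_A). -/
import Mathlib


open CategoryTheory CategoryTheory.Limits

universe v u

variable {C : Type u} [Category.{v} C] [Preadditive C] [HasBinaryBiproducts C]

/-- A differential combinator transformation on a monad `S`. -/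
structure DiffCombTrans (S : Monad C) where
  d : ∀ A : C, S.obj A ⟶ S.obj (A ⊞ A)
  natural : ∀ {A B : C} (f : A ⟶ B), S.map f ≫ d B = d A ≫ S.map (biprod.map f f)
  dc1 : ∀ A : C, d A ≫ S.map biprod.fst = 0
  dc2 : ∀ A : C,
    d A ≫ S.map (biprod.lift biprod.fst (biprod.lift biprod.snd biprod.snd)) =
      d A ≫ S.map (biprod.lift biprod.fst (biprod.lift biprod.snd 0)) +
      d A ≫ S.map (biprod.lift biprod.fst (biprod.lift 0 biprod.snd))
  dc3 : ∀ A : C, S.η.app A ≫ d A = biprod.lift 0 (𝟙 A) ≫ S.η.app (A ⊞ A)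
  dc4 : ∀ A : C, S.μ.app A ≫ d A =
    d (S.obj A) ≫
      S.map (biprod.fst ≫ S.map (biprod.lift (𝟙 A) 0) + biprod.snd ≫ d A) ≫
      S.μ.app (A ⊞ A)
  dc5 : ∀ A : C, d A ≫ d (A ⊞ A) ≫
      S.map (biprod.lift (biprod.fst ≫ biprod.fst) (biprod.snd ≫ biprod.snd)) = d A
  dc6 : ∀ A : C, d A ≫ d (A ⊞ A) ≫
      S.map (biprod.lift
        (biprod.lift (biprod.fst ≫ biprod.fst) (biprod.snd ≫ biprod.fst))
        (biprod.lift (biprod.fst ≫ biprod.snd) (biprod.snd ≫ biprod.snd))) =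
      d A ≫ d (A ⊞ A)

/-- `λ_A := ⟨S(π₁), S(π₁+π₄) ∘ ∂_{A×A}⟩ : S(A×A) ⟶ S(A) × S(A)`. -/
noncomputable def lamOf (S : Monad C) (p : DiffCombTrans S) (A : C) :
    S.obj (A ⊞ A) ⟶ S.obj A ⊞ S.obj A :=
  biprod.lift (S.map biprod.fst)
    (p.d (A ⊞ A) ≫ S.map (biprod.fst ≫ biprod.fst + biprod.snd ≫ biprod.snd))

/-- `λ` is natural and is a distributive law of the diagonal functor over the monad. -/
theorem lamOf_natural_and_distributive (S : Monad C) (p : DiffCombTrans S) :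
    (∀ {A B : C} (f : A ⟶ B),
        S.map (biprod.map f f) ≫ lamOf S p B =
          lamOf S p A ≫ biprod.map (S.map f) (S.map f)) ∧
    (∀ A : C, S.η.app (A ⊞ A) ≫ lamOf S p A = biprod.map (S.η.app A) (S.η.app A)) ∧
    (∀ A : C, S.μ.app (A ⊞ A) ≫ lamOf S p A =
        S.map (lamOf S p A) ≫ lamOf S p (S.obj A) ≫
          biprod.map (S.μ.app A) (S.μ.app A)) := by

  refine ⟨?_, ?_, ?_⟩
  · intro A B f
    apply biprod.hom_ext
    · simp only [lamOf, Category.assoc, biprod.lift_fst, biprod.map_fst,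
        biprod.lift_fst_assoc, ← S.map_comp, biprod.map_fst]
    · simp only [lamOf, Category.assoc, biprod.lift_snd, biprod.map_snd,
        biprod.lift_snd_assoc]
      rw [reassoc_of% (p.natural (biprod.map f f)), ← S.map_comp, ← S.map_comp]
      congr 1
      simp [Preadditive.comp_add, Preadditive.add_comp]
  · intro A
    apply biprod.hom_ext
    · simp only [lamOf, Category.assoc, biprod.lift_fst, biprod.map_fst]
      exact (S.η.naturality (biprod.fst : A ⊞ A ⟶ A)).symm
    · simp only [lamOf, Category.assoc, biprod.lift_snd, biprod.map_snd]
      rw [reassoc_of% (p.dc3 (A ⊞ A)), ← S.η.naturality]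
      simp [Preadditive.comp_add]
  · intro A
    apply biprod.hom_ext
    · simp only [lamOf, Category.assoc, biprod.lift_fst, biprod.map_fst,
        biprod.lift_fst_assoc]
      rw [← S.μ.naturality, ← S.map_comp_assoc]
      simp [lamOf]
    · simp only [lamOf, Category.assoc, biprod.lift_snd, biprod.map_snd,
        biprod.lift_snd_assoc]
      have hnat := reassoc_of% (p.natural (biprod.lift (S.map biprod.fst)
          (p.d (A ⊞ A) ≫ S.map (biprod.fst ≫ biprod.fst + biprod.snd ≫ biprod.snd))))
      rw [reassoc_of% (p.dc4 (A ⊞ A)), ← S.μ.naturality, hnat,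
        ← S.map_comp_assoc]
      simp only [Functor.comp_map]
      rw [← S.map_comp_assoc]
      congr 2
      simp [lamOf, Preadditive.comp_add, Preadditive.add_comp, ← S.map_comp]
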